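/- Let ε > 0 and p > 0. (i) For all real numbers a and b, k_{ε,p}(a − b) · ((a−1)⁺ − (b−1)⁺) ≥ 0, where s⁺ = max(s,0). (ii) If Ω ⊂ ℝ² is a bounded measurable set, w : ℝ² → ℝ is a nonnegative bounded measurable even function, and u : Ω → ℝ is bounded measurable, then ∫_Ω K_{ε,p}(u)(x) · (u(x) − 1)⁺ dx ≤ 0. -/

import Mathlib

open Real MeasureTheory

/-- The differential kernel `k_{ε,p}(s) = s (s² + ε²)^((p−2)/2)`. -/
noncomputable def kKer (ε p s : ℝ) : ℝ := s * (s ^ 2 + ε ^ 2) ^ ((p - 2) / 2)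

/-- `v` is bounded and measurable (bounded on `Ω`). -/
def BddMeas (Ω : Set (ℝ × ℝ)) (v : ℝ × ℝ → ℝ) : Prop :=
  Measurable v ∧ ∃ M, ∀ x ∈ Ω, |v x| ≤ M

/-- The nonlocal diffusion operator `K_{ε,p}(v)(x) = ∫_Ω w(x−y) k_{ε,p}(v(y)−v(x)) dy`. -/
noncomputable def Knl (ε p : ℝ) (w : ℝ × ℝ → ℝ) (Ω : Set (ℝ × ℝ)) (v : ℝ × ℝ → ℝ)
    (x : ℝ × ℝ) : ℝ :=
  ∫ y in Ω, w (x - y) * kKer ε p (v y - v x)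

lemma kKer_neg (ε p s : ℝ) : kKer ε p (-s) = -kKer ε p s := by
  simp [kKer, neg_sq]

lemma kKer_cont (ε p : ℝ) (hε : 0 < ε) : Continuous (kKer ε p) := by
  unfold kKer
  exact continuous_id.mul (((continuous_pow 2).add continuous_const).rpow_const
    (fun x => Or.inl (by show x ^ 2 + ε ^ 2 ≠ 0; positivity)))

lemma kKer_meas (ε p : ℝ) (hε : 0 < ε) : Measurable (kKer ε p) :=
  (kKer_cont ε p hε).measurable

lemma part_i (ε p : ℝ) (hε : 0 < ε) :
    ∀ a b : ℝ, 0 ≤ kKer ε p (a - b) * (max (a - 1) 0 - max (b - 1) 0) := by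
  intro a b
  have hr : 0 < ((a - b) ^ 2 + ε ^ 2) ^ ((p - 2) / 2) :=
    Real.rpow_pos_of_pos (by positivity) _
  rcases le_total b a with h | h
  · exact mul_nonneg (mul_nonneg (by linarith) hr.le)
      (sub_nonneg.2 (max_le_max (by linarith) le_rfl))
  · exact mul_nonneg_of_nonpos_of_nonpos
      (mul_nonpos_of_nonpos_of_nonneg (by linarith) hr.le)
      (sub_nonpos.2 (max_le_max (by linarith) le_rfl))

theorem nonlocal_posPart_nonpos (ε p : ℝ) (hε : 0 < ε) (hp : 0 < p) :
    (∀ a b : ℝ, 0 ≤ kKer ε p (a - b) * (max (a - 1) 0 - max (b - 1) 0)) ∧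
    ∀ (Ω : Set (ℝ × ℝ)), MeasurableSet Ω → Bornology.IsBounded Ω →
    ∀ (w : ℝ × ℝ → ℝ), Measurable w → (∀ z, 0 ≤ w z) → (∃ M, ∀ z, |w z| ≤ M) →
      (∀ z, w (-z) = w z) →
    ∀ (u : ℝ × ℝ → ℝ), BddMeas Ω u →
      ∫ x in Ω, Knl ε p w Ω u x * max (u x - 1) 0 ≤ 0 := by
  refine ⟨part_i ε p hε, ?_⟩
  rintro Ω hΩmeas hΩbdd w hwmeas hwpos ⟨Cw, hCw⟩ hweven u ⟨humeas, M, hM⟩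
  set μ : Measure (ℝ × ℝ) := volume.restrict Ω with hμ
  haveI : IsFiniteMeasure μ := by
    constructor
    rw [hμ, Measure.restrict_apply_univ]
    exact hΩbdd.measure_lt_top
  set M' : ℝ := max M 0 with hM'def
  have hM' : ∀ x ∈ Ω, |u x| ≤ M' := fun x hx => (hM x hx).trans (le_max_left _ _)
  have hM'0 : 0 ≤ M' := le_max_right _ _
  obtain ⟨Ck, hCk⟩ := (isCompact_Icc (a := -(2 * M')) (b := 2 * M')).exists_bound_of_continuousOn
    (kKer_cont ε p hε).continuousOn
  have hCk0 : 0 ≤ Ck := le_trans (norm_nonneg _) (hCk 0 (by constructor <;> linarith))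
  have hCw0 : 0 ≤ Cw := le_trans (abs_nonneg _) (hCw 0)
  set F : (ℝ × ℝ) × ℝ × ℝ → ℝ := fun z => w (z.1 - z.2) * kKer ε p (u z.2 - u z.1) * max (u z.1 - 1) 0
    with hF
  have hFmeas : Measurable F :=
    ((hwmeas.comp (measurable_fst.sub measurable_snd)).mul
      ((kKer_meas ε p hε).comp ((humeas.comp measurable_snd).sub (humeas.comp measurable_fst)))).mul
      (((humeas.comp measurable_fst).sub_const 1).max measurable_const)
  have hprod : μ.prod μ = (volume.prod volume).restrict (Ω ×ˢ Ω) := by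
    rw [hμ, Measure.prod_restrict]
  have hae : ∀ᵐ z ∂(μ.prod μ), z ∈ Ω ×ˢ Ω := by
    rw [hprod]; exact ae_restrict_mem (hΩmeas.prod hΩmeas)
  have hFint : Integrable F (μ.prod μ) := by
    refine Integrable.mono' (integrable_const (Cw * Ck * (M' + 1)))
      hFmeas.aestronglyMeasurable ?_
    filter_upwards [hae] with z hz
    obtain ⟨h1, h2⟩ := hz
    have hu1 := hM' _ h1
    have hu2 := hM' _ h2
    have hkb : ‖kKer ε p (u z.2 - u z.1)‖ ≤ Ck := by
      apply hCk
      constructor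
      · have := abs_le.1 hu1; have := abs_le.1 hu2; linarith
      · have := abs_le.1 hu1; have := abs_le.1 hu2; linarith
    have hwb : |w (z.1 - z.2)| ≤ Cw := hCw _
    have hmx : |max (u z.1 - 1) 0| ≤ M' + 1 := by
      rw [abs_of_nonneg (le_max_right _ _)]
      have := abs_le.1 hu1
      exact max_le (by linarith) (by linarith)
    calc ‖F z‖ = |w (z.1 - z.2)| * ‖kKer ε p (u z.2 - u z.1)‖ * |max (u z.1 - 1) 0| := by
          rw [hF]; simp [Real.norm_eq_abs, abs_mul]
      _ ≤ Cw * Ck * (M' + 1) := by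
          apply mul_le_mul (mul_le_mul hwb hkb (norm_nonneg _) hCw0) hmx (abs_nonneg _)
          positivity
  have hswapint : Integrable (fun z : (ℝ × ℝ) × ℝ × ℝ => F z.swap) (μ.prod μ) := hFint.swap
  have hI : (∫ x in Ω, Knl ε p w Ω u x * max (u x - 1) 0) = ∫ z, F z ∂(μ.prod μ) := by
    have h1 : ∀ x, Knl ε p w Ω u x * max (u x - 1) 0 = ∫ y in Ω, F (x, y) := by
      intro x
      rw [Knl, ← integral_mul_const]
    simp_rw [h1]
    exact integral_integral hFint
  have hswapeq : ∫ z, F z.swap ∂(μ.prod μ) = ∫ z, F z ∂(μ.prod μ) := integral_prod_swap F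
  have hsum : ∀ z : (ℝ × ℝ) × ℝ × ℝ, F z + F z.swap ≤ 0 := by
    intro z
    have he : w (z.2 - z.1) = w (z.1 - z.2) := by
      rw [← neg_sub z.1 z.2, hweven]
    have hk : kKer ε p (u z.1 - u z.2) = -kKer ε p (u z.2 - u z.1) := by
      rw [← neg_sub (u z.2) (u z.1), kKer_neg]
    have hpi := part_i ε p hε (u z.1) (u z.2)
    have hw0 := hwpos (z.1 - z.2)
    have : F z + F z.swap
        = -(w (z.1 - z.2) * (kKer ε p (u z.1 - u z.2) * (max (u z.1 - 1) 0 - max (u z.2 - 1) 0))) := by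
      simp only [hF, Prod.fst_swap, Prod.snd_swap, he, hk]
      ring
    rw [this]
    simp only [neg_nonpos]
    exact mul_nonneg hw0 hpi
  have h2I : (∫ z, F z ∂(μ.prod μ)) + (∫ z, F z ∂(μ.prod μ)) ≤ 0 := by
    nth_rewrite 2 [← hswapeq]
    rw [← integral_add hFint hswapint]
    exact integral_nonpos fun z => hsum z
  linarith [hI ▸ h2I]
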